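/- Let κ be an infinite regular cardinal and R an associative unital ring that is <κ-Noetherian. Then every submodule of a free left R-module having a basis of cardinality less than κ is <κ-generated. -/

import Mathlib

/-!
STATEMENT 9: if `κ` is an infinite regular cardinal and `R` is `<κ`-Noetherian
(every left ideal is `<κ`-generated), then every submodule of a free module with a
basis of cardinality `< κ` is `<κ`-generated.
-/

universe u

open Cardinal

theorem submodule_small_generated_of_ltKappa_noetherian {R : Type u} [Ring R]
    (κ : Cardinal.{u}) (hκ : κ.IsRegular)
    (hNoeth : ∀ I : Submodule R R, ∃ S : Set R, #S < κ ∧ Submodule.span R S = I)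
    {ι : Type u} {F : Type u} [AddCommGroup F] [Module R F] (b : Module.Basis ι R F)
    (hι : #ι < κ) (G : Submodule R F) :
    ∃ S : Set F, #S < κ ∧ Submodule.span R S = G := by
  classical
  -- finite case by induction on finsets
  have key : ∀ s : Finset ι, ∃ S : Set F, #S < κ ∧
      Submodule.span R S = G ⊓ Submodule.span R (b '' ↑s) := by
    intro s
    induction s using Finset.induction with
    | empty =>
        refine ⟨∅, by simpa using hκ.pos, ?_⟩
        simp
    | @insert i s hi ih =>
        obtain ⟨S₀, hS₀κ, hS₀⟩ := ih
        set N : Submodule R F := G ⊓ Submodule.span R (b '' ↑(insert i s)) with hN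
        set c : F →ₗ[R] R := b.coord i with hc
        obtain ⟨T, hTκ, hT⟩ := hNoeth (N.map c)
        have hTsub : ∀ t : T, ∃ x, x ∈ N ∧ c x = t := by
          intro t
          have := hT ▸ Submodule.subset_span t.2
          obtain ⟨x, hx, hcx⟩ := this
          exact ⟨x, hx, hcx⟩
        choose f hfN hfc using hTsub
        set S : Set F := S₀ ∪ Set.range f with hS
        have hcard : #S < κ := by
          apply (mk_union_le _ _).trans_lt
          apply Cardinal.add_lt_of_lt hκ.aleph0_le hS₀κ
          exact mk_range_le.trans_lt hTκ
        refine ⟨S, hcard, ?_⟩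
        have hS₀le : Submodule.span R S₀ ≤ N := by
          rw [hS₀]
          exact inf_le_inf le_rfl (Submodule.span_mono (Set.image_mono (by simp)))
        apply le_antisymm
        · rw [Submodule.span_le]
          rintro x (hx | ⟨t, rfl⟩)
          · exact hS₀le (Submodule.subset_span hx)
          · exact hfN t
        · intro x hx
          set M := Submodule.span R S with hM
          -- J : ideal of c-values achievable in M ⊓ N
          have hTJ : Submodule.span R T ≤ (M ⊓ N).map c := by
            rw [Submodule.span_le]
            intro t ht
            exact ⟨f ⟨t, ht⟩, ⟨Submodule.subset_span (Or.inr ⟨⟨t, ht⟩, rfl⟩), hfN ⟨t, ht⟩⟩, hfc ⟨t, ht⟩⟩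
          have hcx : c x ∈ (M ⊓ N).map c := hTJ (hT ▸ ⟨x, hx, rfl⟩)
          obtain ⟨y, ⟨hyM, hyN⟩, hycy⟩ := hcx
          have hxyN : x - y ∈ N := N.sub_mem hx hyN
          have hxyc : c (x - y) = 0 := by rw [map_sub, hycy, sub_self]
          have hxys : x - y ∈ Submodule.span R (b '' ↑s) := by
            have h1 : x - y ∈ Submodule.span R (b '' ↑(insert i s)) := hxyN.2
            rw [Module.Basis.mem_span_image] at h1 ⊢
            intro j hj
            have hji : j ≠ i := by
              rintro rfl
              have hz : b.repr (x - y) j = 0 := by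
                rw [← Module.Basis.coord_apply]; exact hxyc
              exact Finsupp.mem_support_iff.mp hj hz
            have := h1 hj
            simp only [Finset.coe_insert, Set.mem_insert_iff] at this
            tauto
          have hxyS : x - y ∈ M := by
            have : x - y ∈ G ⊓ Submodule.span R (b '' ↑s) := ⟨hxyN.1, hxys⟩
            rw [← hS₀] at this
            exact Submodule.span_mono (Set.subset_union_left) this
          have : x = y + (x - y) := by abel
          rw [this]
          exact M.add_mem hyM hxyS
  choose Sf hSfκ hSf using key
  refine ⟨⋃ s : Finset ι, Sf s, ?_, ?_⟩
  · apply mk_iUnion_le_sum_mk.trans_lt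
    apply Cardinal.sum_lt_of_isRegular hκ _ hSfκ
    rcases finite_or_infinite ι with h | h <;> haveI := h; haveI := Fintype.ofFinite ι
    · exact lt_of_lt_of_le (Cardinal.lt_aleph0_of_finite _) hκ.aleph0_le
    · rwa [Cardinal.mk_finset_of_infinite]
  · rw [Submodule.span_iUnion]
    apply le_antisymm
    · exact iSup_le fun s => (hSf s).le.trans inf_le_left
    · intro x hx
      have : x ∈ G ⊓ Submodule.span R (b '' ↑(b.repr x).support) :=
        ⟨hx, b.mem_span_repr_support x⟩
      rw [← hSf] at this
      exact Submodule.mem_iSup_of_mem _ this
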